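/- Let F₁, F₂, G₁, G₂ be differentiable survival functions on [0,∞) with F_i(0) = G_i(0) = 1, such that conditions (i) [F₁(t)+F₂(t)]²/4 ≥ G₁(t)G₂(t) and (ii) F_i(t) ≤ G_i(t) (i = 1,2) hold for all t ≥ 0. Then F_i'(0) = G_i'(0) for i = 1,2; equivalently, the density functions satisfy f_i(0) = g_i(0), i = 1,2. -/

import Mathlib

lemma deriv_nonneg_of_nonneg_right (f : ℝ → ℝ) (f' : ℝ)
    (hf : HasDerivAt f f' 0) (h0 : f 0 = 0)
    (hpos : ∀ t, 0 ≤ t → 0 ≤ f t) : 0 ≤ f' := by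
  have ht : Filter.Tendsto (slope f 0) (nhdsWithin 0 (Set.Ioi 0)) (nhds f') :=
    (hasDerivAt_iff_tendsto_slope.mp hf).mono_left
      (nhdsWithin_mono _ (fun x hx => ne_of_gt hx))
  refine ge_of_tendsto ht ?_
  filter_upwards [self_mem_nhdsWithin] with t htpos
  have htpos' : (0:ℝ) < t := htpos
  have : slope f 0 t = f t / t := by
    simp [slope_def_field, h0, div_eq_div_iff]
  rw [this]
  exact div_nonneg (hpos t htpos'.le) htpos'.le

theorem stmt_15 (F₁ F₂ G₁ G₂ : ℝ → ℝ)
    (hdF₁ : Differentiable ℝ F₁) (hdF₂ : Differentiable ℝ F₂)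
    (hdG₁ : Differentiable ℝ G₁) (hdG₂ : Differentiable ℝ G₂)
    (hF₁0 : F₁ 0 = 1) (hF₂0 : F₂ 0 = 1) (hG₁0 : G₁ 0 = 1) (hG₂0 : G₂ 0 = 1)
    (hi : ∀ t, 0 ≤ t → G₁ t * G₂ t ≤ (F₁ t + F₂ t) ^ 2 / 4)
    (hii₁ : ∀ t, 0 ≤ t → F₁ t ≤ G₁ t) (hii₂ : ∀ t, 0 ≤ t → F₂ t ≤ G₂ t) :
    deriv F₁ 0 = deriv G₁ 0 ∧ deriv F₂ 0 = deriv G₂ 0 := by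
  have hF₁ := (hdF₁ 0).hasDerivAt
  have hF₂ := (hdF₂ 0).hasDerivAt
  have hG₁ := (hdG₁ 0).hasDerivAt
  have hG₂ := (hdG₂ 0).hasDerivAt
  -- k₁' ≥ 0
  have hk₁ : 0 ≤ deriv G₁ 0 - deriv F₁ 0 := by
    apply deriv_nonneg_of_nonneg_right (fun t => G₁ t - F₁ t) _ (hG₁.sub hF₁)
    · simp [hF₁0, hG₁0]
    · intro t ht; simpa using hii₁ t ht
  have hk₂ : 0 ≤ deriv G₂ 0 - deriv F₂ 0 := by
    apply deriv_nonneg_of_nonneg_right (fun t => G₂ t - F₂ t) _ (hG₂.sub hF₂)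
    · simp [hF₂0, hG₂0]
    · intro t ht; simpa using hii₂ t ht
  -- h' ≥ 0
  have hh : 0 ≤ (deriv F₁ 0 + deriv F₂ 0) - (deriv G₁ 0 + deriv G₂ 0) := by
    have hder : HasDerivAt (fun t => (F₁ t + F₂ t) ^ 2 / 4 - G₁ t * G₂ t)
        ((deriv F₁ 0 + deriv F₂ 0) - (deriv G₁ 0 + deriv G₂ 0)) 0 := by
      have h1 : HasDerivAt (fun t => (F₁ t + F₂ t) ^ 2 / 4)
          ((2 * (F₁ 0 + F₂ 0) ^ 1 * (deriv F₁ 0 + deriv F₂ 0)) / 4) 0 :=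
        ((hF₁.add hF₂).pow 2).div_const 4
      have h2 : HasDerivAt (fun t => G₁ t * G₂ t)
          (deriv G₁ 0 * G₂ 0 + G₁ 0 * deriv G₂ 0) 0 := hG₁.mul hG₂
      have := h1.sub h2
      refine this.congr_deriv ?_
      rw [hF₁0, hF₂0, hG₁0, hG₂0]
      ring
    apply deriv_nonneg_of_nonneg_right _ _ hder
    · simp [hF₁0, hF₂0, hG₁0, hG₂0]; norm_num
    · intro t ht
      have := hi t ht
      simp only [sub_nonneg]
      linarith
  constructor <;> linarith
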